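/- arXiv:2409.01350 — 2 statements merged into one kernel-verified Lean document; each statement's English description precedes it below -/
import Mathlib

section
/- Suppose L₁ ⊊ L₂ ⊂ V are two G-stable Λ-lattices, free of rank 2, with L₁ ∩ V_1 = L₂ ∩ V_1. Then L₁ = (L₁ ∩ V_1) ⊕ c·(L₁ ∩ V_1) (so L₁ is isomorphic to the induced module Ind_H^G(Λ(ψ))), and L₂/L₁ ≅ Λ/TΛ. -/
open PowerSeries

theorem aux_pair {R M : Type*} [CommRing R] [Nontrivial R] [AddCommGroup M] [Module R M]
    (L : Submodule R M) (hfree : Module.Free R L) (hrank : Module.rank R L = 2) :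
    ∃ u w : M, u ∈ L ∧ w ∈ L ∧ (∀ v ∈ L, ∃ r s : R, v = r • u + s • w) ∧
      ∀ r s : R, r • u + s • w = 0 → r = 0 ∧ s = 0 := by
  classical
  haveI := hfree
  have hcard : Cardinal.mk (Module.Free.ChooseBasisIndex R L) = 2 := by
    rw [← Module.Free.rank_eq_card_chooseBasisIndex]; exact hrank
  obtain ⟨x, y, hxy, hcov⟩ := Cardinal.mk_eq_two_iff.mp hcard
  haveI : Finite (Module.Free.ChooseBasisIndex R L) := by
    rw [← Cardinal.lt_aleph0_iff_finite, hcard]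
    exact_mod_cast Cardinal.nat_lt_aleph0 2
  haveI : Fintype (Module.Free.ChooseBasisIndex R L) := Fintype.ofFinite _
  set b := Module.Free.chooseBasis R L with hb
  have huniv : (Finset.univ : Finset (Module.Free.ChooseBasisIndex R L)) = {x, y} := by
    ext i
    simp only [Finset.mem_univ, true_iff, Finset.mem_insert, Finset.mem_singleton]
    have : i ∈ ({x, y} : Set _) := hcov ▸ Set.mem_univ i
    simpa using this
  refine ⟨(b x : M), (b y : M), (b x).2, (b y).2, ?_, ?_⟩
  · intro v hv
    have hrep : ∑ i, b.repr ⟨v, hv⟩ i • b i = ⟨v, hv⟩ := b.sum_repr ⟨v, hv⟩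
    rw [huniv, Finset.sum_insert (by simpa using hxy), Finset.sum_singleton] at hrep
    refine ⟨b.repr ⟨v, hv⟩ x, b.repr ⟨v, hv⟩ y, ?_⟩
    have := congrArg (Submodule.subtype L) hrep
    simpa using this.symm
  · intro r s h
    have h' : r • b x + s • b y = (0 : L) := by
      apply Subtype.coe_injective
      simpa using h
    have hr := congrArg b.repr h'
    rw [map_add, map_smul, map_smul, b.repr_self, b.repr_self, map_zero] at hr
    constructor
    · have := DFunLike.congr_fun hr x
      simpa [Finsupp.single_apply, hxy.symm] using this
    · have := DFunLike.congr_fun hr y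
      simpa [Finsupp.single_apply, hxy] using this

set_option maxHeartbeats 1000000

/-- Same setting as before (`Λ = ℤ_p[[T]]` with fraction field `F`; `G` with index-2 subgroup
`H` and `c ∈ G∖H`, `c² = 1`; `ψ : H → Λ^×` whose differences with its conjugate `ψ^c`
generate the ideal `(T)`; `V = F·e₁ ⊕ F·e₂` with `H` acting by `diag(ψ, ψ^c)` and `c`
swapping; `V₁ = F·e₁`).  Suppose `L₁ ⊊ L₂ ⊂ V` are two `G`-stable rank-2 `Λ`-lattices with
`L₁ ∩ V₁ = L₂ ∩ V₁`.  Then `L₁ = (L₁ ∩ V₁) ⊕ c·(L₁ ∩ V₁)` (so `L₁` is isomorphic to the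
induced module `Ind_H^G(Λ(ψ))`), and `L₂/L₁ ≅ Λ/TΛ`; in particular the inclusion
`L₁ ⊆ L₂` identifies `L₁/(L₁ ∩ V₁)` with `T·(L₂/(L₂ ∩ V₁))`. -/
theorem stmt7 (p : ℕ) [Fact p.Prime]
    (F : Type*) [Field F] [Algebra (PowerSeries ℤ_[p]) F]
    [IsFractionRing (PowerSeries ℤ_[p]) F]
    {G : Type*} [Group G] (H : Subgroup G) (hidx : H.index = 2)
    (c : G) (hc : c ∉ H) (hc2 : c * c = 1)
    (ψ ψc : H →* (PowerSeries ℤ_[p])ˣ)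
    (hψc : ∀ h : H, ∃ hm : c⁻¹ * (h : G) * c ∈ H, ψc h = ψ ⟨c⁻¹ * (h : G) * c, hm⟩)
    (hT : Ideal.span (Set.range fun h : H =>
        ((ψ h : PowerSeries ℤ_[p]) - (ψc h : PowerSeries ℤ_[p])))
      = Ideal.span {(X : PowerSeries ℤ_[p])})
    (ρ : Representation (PowerSeries ℤ_[p]) G (F × F))
    (hρH : ∀ (h : H) (x : F × F),
      ρ (h : G) x = ((ψ h : PowerSeries ℤ_[p]) • x.1, (ψc h : PowerSeries ℤ_[p]) • x.2))
    (hρc : ∀ x : F × F, ρ c x = (x.2, x.1))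
    (L₁ L₂ : Submodule (PowerSeries ℤ_[p]) (F × F))
    (hL1free : Module.Free (PowerSeries ℤ_[p]) L₁)
    (hL1rank : Module.rank (PowerSeries ℤ_[p]) L₁ = 2)
    (hL1stab : ∀ (g : G) (x : F × F), x ∈ L₁ → ρ g x ∈ L₁)
    (hL2free : Module.Free (PowerSeries ℤ_[p]) L₂)
    (hL2rank : Module.rank (PowerSeries ℤ_[p]) L₂ = 2)
    (hL2stab : ∀ (g : G) (x : F × F), x ∈ L₂ → ρ g x ∈ L₂)
    (hlt : L₁ < L₂)
    (hV₁ : L₁ ⊓ LinearMap.ker (LinearMap.snd (PowerSeries ℤ_[p]) F F)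
      = L₂ ⊓ LinearMap.ker (LinearMap.snd (PowerSeries ℤ_[p]) F F)) :
    let V₁ : Submodule (PowerSeries ℤ_[p]) (F × F) :=
      LinearMap.ker (LinearMap.snd (PowerSeries ℤ_[p]) F F)
    (L₁ = (L₁ ⊓ V₁) ⊔ (L₁ ⊓ V₁).map (ρ c) ∧ Disjoint (L₁ ⊓ V₁) ((L₁ ⊓ V₁).map (ρ c))) ∧
    Nonempty ((L₂.map L₁.mkQ) ≃ₗ[PowerSeries ℤ_[p]]
      (PowerSeries ℤ_[p] ⧸ Ideal.span {(X : PowerSeries ℤ_[p])})) := by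
  intro V₁
  classical
  have hL12 : L₁ ≤ L₂ := hlt.le
  have hinj : Function.Injective (algebraMap (PowerSeries ℤ_[p]) F) :=
    IsFractionRing.injective _ _
  have hXne : algebraMap (PowerSeries ℤ_[p]) F X ≠ 0 := by
    intro h
    exact X_ne_zero (hinj (by rw [h, map_zero]))
  -- cancellation of X on F
  have hXcF : ∀ t : F, (X : PowerSeries ℤ_[p]) • t = 0 → t = 0 := by
    intro t ht
    rw [Algebra.smul_def] at ht
    rcases mul_eq_zero.mp ht with h | h
    · exact absurd h hXne
    · exact h
  -- cancellation of X on F × F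
  have hXc : ∀ z z' : F × F, (X : PowerSeries ℤ_[p]) • z = (X : PowerSeries ℤ_[p]) • z' →
      z = z' := by
    intro z z' h
    have h0 : (X : PowerSeries ℤ_[p]) • (z - z') = 0 := by rw [smul_sub, h, sub_self]
    have h1 : (z - z').1 = 0 := hXcF _ (by
      have h1' := congrArg Prod.fst h0
      simp only [Prod.smul_fst, Prod.fst_zero] at h1'
      exact h1')
    have h2 : (z - z').2 = 0 := hXcF _ (by
      have h2' := congrArg Prod.snd h0
      simp only [Prod.smul_snd, Prod.snd_zero] at h2'
      exact h2')
    have : z - z' = 0 := Prod.ext h1 h2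
    exact sub_eq_zero.mp this
  -- the submodule B of F
  set B : Submodule (PowerSeries ℤ_[p]) F :=
    L₁.comap (LinearMap.inl (PowerSeries ℤ_[p]) F F) with hBdef
  have hBmem : ∀ t : F, t ∈ B ↔ (t, (0 : F)) ∈ L₁ := by
    intro t; rw [hBdef, Submodule.mem_comap, LinearMap.inl_apply]
  have hBiff : ∀ t : F, (t, (0 : F)) ∈ L₁ ↔ (t, (0 : F)) ∈ L₂ := by
    intro t
    have h1 : ((t, (0:F)) ∈ L₁ ⊓ V₁) ↔ ((t, (0:F)) ∈ L₂ ⊓ V₁) := by rw [hV₁]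
    simpa [Submodule.mem_inf, V₁, LinearMap.mem_ker] using h1
  have hswap1 : ∀ v : F × F, v ∈ L₁ → (v.2, v.1) ∈ L₁ := by
    intro v hv
    have := hL1stab c v hv
    rwa [hρc] at this
  have hswap2 : ∀ v : F × F, v ∈ L₂ → (v.2, v.1) ∈ L₂ := by
    intro v hv
    have := hL2stab c v hv
    rwa [hρc] at this
  -- X • (first coordinate) lands in B
  have hXB : ∀ v : F × F, v ∈ L₂ → (X : PowerSeries ℤ_[p]) • v.1 ∈ B := by
    intro v hv
    have hgen : ∀ h : H, ((ψ h : PowerSeries ℤ_[p]) - (ψc h : PowerSeries ℤ_[p])) • v.1 ∈ B := by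
      intro h
      have h1 : ρ (h : G) v ∈ L₂ := hL2stab _ _ hv
      have h2 : ((ψc h : PowerSeries ℤ_[p])) • v ∈ L₂ := L₂.smul_mem _ hv
      have h3 := L₂.sub_mem h1 h2
      have key : ρ (h : G) v - ((ψc h : PowerSeries ℤ_[p])) • v
          = (((ψ h : PowerSeries ℤ_[p]) - (ψc h : PowerSeries ℤ_[p])) • v.1, (0 : F)) := by
        rw [hρH]
        apply Prod.ext
        · simp [sub_smul, Prod.smul_fst]
        · simp [Prod.smul_snd]
      rw [key] at h3
      rw [hBmem, hBiff]
      exact h3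
    have hspan : Ideal.span (Set.range fun h : H =>
        ((ψ h : PowerSeries ℤ_[p]) - (ψc h : PowerSeries ℤ_[p])))
        ≤ B.comap (LinearMap.toSpanSingleton (PowerSeries ℤ_[p]) F v.1) := by
      rw [Ideal.span_le]
      rintro _ ⟨h, rfl⟩
      simpa [Submodule.mem_comap, LinearMap.toSpanSingleton_apply] using hgen h
    have hx : (X : PowerSeries ℤ_[p]) ∈ Ideal.span (Set.range fun h : H =>
        ((ψ h : PowerSeries ℤ_[p]) - (ψc h : PowerSeries ℤ_[p]))) := by
      rw [hT]
      exact Ideal.mem_span_singleton_self X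
    have := hspan hx
    simpa [Submodule.mem_comap, LinearMap.toSpanSingleton_apply] using this
  have hXB2 : ∀ v : F × F, v ∈ L₂ → (X : PowerSeries ℤ_[p]) • v.2 ∈ B := by
    intro v hv
    exact hXB (v.2, v.1) (hswap2 v hv)
  have hB0 : ∀ t : F, t ∈ B → ((0 : F), t) ∈ L₁ := by
    intro t ht
    have := hswap1 (t, 0) ((hBmem t).mp ht)
    simpa using this
  have hXL₁ : ∀ v : F × F, v ∈ L₂ → (X : PowerSeries ℤ_[p]) • v ∈ L₁ := by
    intro v hv
    have h1 : ((X : PowerSeries ℤ_[p]) • v.1, (0 : F)) ∈ L₁ := (hBmem _).mp (hXB v hv)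
    have h2 : ((0 : F), (X : PowerSeries ℤ_[p]) • v.2) ∈ L₁ := hB0 _ (hXB2 v hv)
    have := L₁.add_mem h1 h2
    have heq : ((X : PowerSeries ℤ_[p]) • v.1, (0 : F)) + ((0:F), (X : PowerSeries ℤ_[p]) • v.2)
        = (X : PowerSeries ℤ_[p]) • v := by
      apply Prod.ext <;> simp
    rwa [heq] at this
  have hfirstB : ∀ v : F × F, v ∈ L₂ → v.1 ∈ B → v ∈ L₁ ∧ v.2 ∈ B := by
    intro v hv h1
    have hv1 : (v.1, (0 : F)) ∈ L₁ := (hBmem _).mp h1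
    have hv2' : ((0 : F), v.2) ∈ L₂ := by
      have := L₂.sub_mem hv (hL12 hv1)
      have heq : v - (v.1, (0:F)) = ((0:F), v.2) := by apply Prod.ext <;> simp
      rwa [heq] at this
    have hv2B : v.2 ∈ B := by
      rw [hBmem, hBiff]
      simpa using hswap2 _ hv2'
    refine ⟨?_, hv2B⟩
    have := L₁.add_mem hv1 (hB0 _ hv2B)
    have heq : (v.1, (0:F)) + ((0:F), v.2) = v := by apply Prod.ext <;> simp
    rwa [heq] at this
  -- basis pair for L₁
  obtain ⟨u₁, w₁, hu₁, hw₁, hspan₁, hind₁⟩ := aux_pair L₁ hL1free hL1rank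
  -- saturation
  have hsat : ∀ (v : F × F) (a : ℤ_[p]), a ≠ 0 → (C (R := ℤ_[p]) a) • v ∈ L₁ →
      (X : PowerSeries ℤ_[p]) • v ∈ L₁ → v ∈ L₁ := by
    intro v a ha h1 h2
    obtain ⟨c₁, d₁, hcd₁⟩ := hspan₁ _ h1
    obtain ⟨c₂, d₂, hcd₂⟩ := hspan₁ _ h2
    have hcomm : (X : PowerSeries ℤ_[p]) • ((C (R := ℤ_[p]) a) • v) =
        (C (R := ℤ_[p]) a) • ((X : PowerSeries ℤ_[p]) • v) := by
      rw [smul_smul, smul_smul, mul_comm]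
    rw [hcd₁, hcd₂] at hcomm
    have heq : ((X : PowerSeries ℤ_[p]) * c₁ - (C (R := ℤ_[p]) a) * c₂) • u₁
        + ((X : PowerSeries ℤ_[p]) * d₁ - (C (R := ℤ_[p]) a) * d₂) • w₁ = 0 := by
      rw [smul_add, smul_add, smul_smul, smul_smul, smul_smul, smul_smul] at hcomm
      rw [sub_smul, sub_smul]
      have h'' : (X * c₁) • u₁ - ((C (R := ℤ_[p])) a * c₂) • u₁
          + ((X * d₁) • w₁ - ((C (R := ℤ_[p])) a * d₂) • w₁)
          = ((X * c₁) • u₁ + (X * d₁) • w₁)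
            - (((C (R := ℤ_[p])) a * c₂) • u₁ + ((C (R := ℤ_[p])) a * d₂) • w₁) := by abel
      rw [h'', hcomm, sub_self]
    obtain ⟨e1, e2⟩ := hind₁ _ _ heq
    have hc2 : constantCoeff (R := ℤ_[p]) c₂ = 0 := by
      have := congrArg (constantCoeff (R := ℤ_[p])) (sub_eq_zero.mp e1)
      simp only [map_mul, constantCoeff_X, zero_mul, constantCoeff_C] at this
      exact (mul_eq_zero.mp this.symm).resolve_left ha
    have hd2 : constantCoeff (R := ℤ_[p]) d₂ = 0 := by
      have := congrArg (constantCoeff (R := ℤ_[p])) (sub_eq_zero.mp e2)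
      simp only [map_mul, constantCoeff_X, zero_mul, constantCoeff_C] at this
      exact (mul_eq_zero.mp this.symm).resolve_left ha
    obtain ⟨f₁, hf₁⟩ := X_dvd_iff.mpr hc2
    obtain ⟨f₂, hf₂⟩ := X_dvd_iff.mpr hd2
    have hXv : (X : PowerSeries ℤ_[p]) • v =
        (X : PowerSeries ℤ_[p]) • (f₁ • u₁ + f₂ • w₁) := by
      rw [hcd₂, hf₁, hf₂, smul_add, smul_smul, smul_smul]
    have := hXc _ _ hXv
    rw [this]
    exact L₁.add_mem (L₁.smul_mem _ hu₁) (L₁.smul_mem _ hw₁)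
  have hsatB : ∀ (t : F) (a : ℤ_[p]), a ≠ 0 → (C (R := ℤ_[p]) a) • t ∈ B →
      (X : PowerSeries ℤ_[p]) • t ∈ B → t ∈ B := by
    intro t a ha h1 h2
    rw [hBmem]
    refine hsat (t, 0) a ha ?_ ?_
    · have := (hBmem _).mp h1
      have heq : ((C (R := ℤ_[p]) a) • t, (0:F)) = (C (R := ℤ_[p]) a) • (t, (0:F)) := by
        apply Prod.ext <;> simp
      rwa [heq] at this
    · have := (hBmem _).mp h2
      have heq : ((X : PowerSeries ℤ_[p]) • t, (0:F)) = (X : PowerSeries ℤ_[p]) • (t, (0:F)) := by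
        apply Prod.ext <;> simp
      rwa [heq] at this
  have hNTF : ∀ v : F × F, v ∈ L₂ → ∀ a : ℤ_[p], a ≠ 0 → (C (R := ℤ_[p]) a) • v ∈ L₁ → v ∈ L₁ :=
    fun v hv a ha h => hsat v a ha h (hXL₁ v hv)
  -- pairwise Λ-dependence in F
  have hdep : ∀ x x' : F, ∃ l m : PowerSeries ℤ_[p], (l ≠ 0 ∨ m ≠ 0) ∧ l • x = m • x' := by
    intro x x'
    by_cases hx : x = 0
    · exact ⟨1, 0, Or.inl one_ne_zero, by simp [hx]⟩
    · obtain ⟨⟨r, s⟩, hrs⟩ := IsLocalization.surj (nonZeroDivisors (PowerSeries ℤ_[p]))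
        (x' / x)
      refine ⟨r, (s : PowerSeries ℤ_[p]), Or.inr (nonZeroDivisors.coe_ne_zero s), ?_⟩
      rw [Algebra.smul_def, Algebra.smul_def]
      field_simp at hrs
      linear_combination -hrs
  -- base case of descent
  have hbase : ∀ (l m : PowerSeries ℤ_[p]) (x x' : F),
      (X : PowerSeries ℤ_[p]) • x ∈ B → (X : PowerSeries ℤ_[p]) • x' ∈ B →
      (constantCoeff (R := ℤ_[p]) l ≠ 0 ∨ constantCoeff (R := ℤ_[p]) m ≠ 0) → l • x = m • x' →
      ∃ a b : ℤ_[p], (a ≠ 0 ∨ b ≠ 0) ∧ (C (R := ℤ_[p]) a) • x - (C (R := ℤ_[p]) b) • x' ∈ B := by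
    intro l m x x' hx hx' hw hrel
    refine ⟨constantCoeff (R := ℤ_[p]) l, constantCoeff (R := ℤ_[p]) m, hw, ?_⟩
    have e1 : l • x - (C (R := ℤ_[p]) (constantCoeff (R := ℤ_[p]) l)) • x ∈ B := by
      obtain ⟨g, hg⟩ : (X : PowerSeries ℤ_[p]) ∣ (l - C (R := ℤ_[p]) (constantCoeff (R := ℤ_[p]) l)) :=
        X_dvd_iff.mpr (by simp)
      have heq : l • x - (C (R := ℤ_[p]) (constantCoeff (R := ℤ_[p]) l)) • x
          = g • ((X : PowerSeries ℤ_[p]) • x) := by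
        rw [← sub_smul, hg, smul_smul, mul_comm]
      rw [heq]
      exact B.smul_mem _ hx
    have e2 : m • x' - (C (R := ℤ_[p]) (constantCoeff (R := ℤ_[p]) m)) • x' ∈ B := by
      obtain ⟨g, hg⟩ : (X : PowerSeries ℤ_[p]) ∣ (m - C (R := ℤ_[p]) (constantCoeff (R := ℤ_[p]) m)) :=
        X_dvd_iff.mpr (by simp)
      have heq : m • x' - (C (R := ℤ_[p]) (constantCoeff (R := ℤ_[p]) m)) • x'
          = g • ((X : PowerSeries ℤ_[p]) • x') := by
        rw [← sub_smul, hg, smul_smul, mul_comm]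
      rw [heq]
      exact B.smul_mem _ hx'
    have e3 : (C (R := ℤ_[p]) (constantCoeff (R := ℤ_[p]) l)) • x - (C (R := ℤ_[p]) (constantCoeff (R := ℤ_[p]) m)) • x'
        = (m • x' - (C (R := ℤ_[p]) (constantCoeff (R := ℤ_[p]) m)) • x')
          - (l • x - (C (R := ℤ_[p]) (constantCoeff (R := ℤ_[p]) l)) • x) := by
      rw [hrel]; abel
    rw [e3]
    exact B.sub_mem e2 e1
  -- descent
  have hkey : ∀ n : ℕ, ∀ l m : PowerSeries ℤ_[p], ∀ x x' : F,
      (X : PowerSeries ℤ_[p]) • x ∈ B → (X : PowerSeries ℤ_[p]) • x' ∈ B →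
      ((coeff (R := ℤ_[p]) n) l ≠ 0 ∨ (coeff (R := ℤ_[p]) n) m ≠ 0) → l • x = m • x' →
      ∃ a b : ℤ_[p], (a ≠ 0 ∨ b ≠ 0) ∧ (C (R := ℤ_[p]) a) • x - (C (R := ℤ_[p]) b) • x' ∈ B := by
    intro n
    induction n with
    | zero =>
      intro l m x x' hx hx' hw hrel
      refine hbase l m x x' hx hx' ?_ hrel
      simpa only [coeff_zero_eq_constantCoeff_apply] using hw
    | succ n ih =>
      intro l m x x' hx hx' hw hrel
      by_cases h0 : constantCoeff (R := ℤ_[p]) l = 0 ∧ constantCoeff (R := ℤ_[p]) m = 0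
      · obtain ⟨l', hl'⟩ := X_dvd_iff.mpr h0.1
        obtain ⟨m', hm'⟩ := X_dvd_iff.mpr h0.2
        have hrel' : l' • x = m' • x' := by
          have hX2 : (X : PowerSeries ℤ_[p]) • (l' • x) = (X : PowerSeries ℤ_[p]) • (m' • x') := by
            rw [smul_smul, smul_smul, ← hl', ← hm', hrel]
          have h4 : (X : PowerSeries ℤ_[p]) • (l' • x - m' • x') = 0 := by
            rw [smul_sub, hX2, sub_self]
          exact sub_eq_zero.mp (hXcF _ h4)
        refine ih l' m' x x' hx hx' ?_ hrel'
        rcases hw with h | h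
        · left; rw [hl', coeff_succ_X_mul] at h; exact h
        · right; rw [hm', coeff_succ_X_mul] at h; exact h
      · exact hbase l m x x' hx hx' (by tauto) hrel
  have hpair : ∀ x x' : F, (X : PowerSeries ℤ_[p]) • x ∈ B → (X : PowerSeries ℤ_[p]) • x' ∈ B →
      ∃ a b : ℤ_[p], (a ≠ 0 ∨ b ≠ 0) ∧ (C (R := ℤ_[p]) a) • x - (C (R := ℤ_[p]) b) • x' ∈ B := by
    intro x x' hx hx'
    obtain ⟨l, m, hlm, hrel⟩ := hdep x x'
    rcases hlm with hl | hm
    · obtain ⟨n, hn⟩ : ∃ n, (coeff (R := ℤ_[p]) n) l ≠ 0 := by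
        by_contra hcon
        push_neg at hcon
        exact hl (PowerSeries.ext fun n => by simpa using hcon n)
      exact hkey n l m x x' hx hx' (Or.inl hn) hrel
    · obtain ⟨n, hn⟩ : ∃ n, (coeff (R := ℤ_[p]) n) m ≠ 0 := by
        by_contra hcon
        push_neg at hcon
        exact hm (PowerSeries.ext fun n => by simpa using hcon n)
      exact hkey n l m x x' hx hx' (Or.inr hn) hrel
  -- element of L₂ not in L₁
  obtain ⟨v', hv'2, hv'1⟩ := SetLike.exists_of_lt hlt
  -- every element of L₁ has first coordinate in B
  have hA1B : ∀ v : F × F, v ∈ L₁ → v.1 ∈ B := by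
    intro v hv
    obtain ⟨a, b, hab, hmem⟩ := hpair v.1 v'.1 (hXB v (hL12 hv)) (hXB v' hv'2)
    by_cases hb : b = 0
    · have ha : a ≠ 0 := by tauto
      refine hsatB v.1 a ha ?_ (hXB v (hL12 hv))
      simpa [hb] using hmem
    · exfalso
      have hw2 : (C (R := ℤ_[p]) a) • v - (C (R := ℤ_[p]) b) • v' ∈ L₂ :=
        L₂.sub_mem (L₂.smul_mem _ (hL12 hv)) (L₂.smul_mem _ hv'2)
      have hw1 : (C (R := ℤ_[p]) a) • v - (C (R := ℤ_[p]) b) • v' ∈ L₁ := by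
        refine (hfirstB _ hw2 ?_).1
        simpa [Prod.smul_fst, Prod.fst_sub] using hmem
      have hbv : (C (R := ℤ_[p]) b) • v' ∈ L₁ := by
        have := L₁.sub_mem (L₁.smul_mem (C (R := ℤ_[p]) a) hv) hw1
        simpa [sub_sub_cancel] using this
      exact hv'1 (hNTF v' hv'2 b hb hbv)
  have hA1B2 : ∀ v : F × F, v ∈ L₁ → v.2 ∈ B := fun v hv => hA1B (v.2, v.1) (hswap1 v hv)
  have hker : ∀ z : F × F, z ∈ V₁ ↔ z.2 = 0 := fun z => LinearMap.mem_ker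
  -- part 1
  have part1a : L₁ = (L₁ ⊓ V₁) ⊔ (L₁ ⊓ V₁).map (ρ c) := by
    apply le_antisymm
    · intro v hv
      have h1 : (v.1, (0 : F)) ∈ L₁ ⊓ V₁ :=
        Submodule.mem_inf.mpr ⟨(hBmem _).mp (hA1B v hv), (hker _).mpr rfl⟩
      have h2 : ((0 : F), v.2) ∈ (L₁ ⊓ V₁).map (ρ c) := by
        refine Submodule.mem_map.mpr ⟨(v.2, (0 : F)), ?_, ?_⟩
        · exact Submodule.mem_inf.mpr ⟨(hBmem _).mp (hA1B2 v hv), (hker _).mpr rfl⟩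
        · rw [hρc]
      exact Submodule.mem_sup.mpr ⟨_, h1, _, h2, by apply Prod.ext <;> simp⟩
    · refine sup_le inf_le_left ?_
      intro z hz
      obtain ⟨w, hw, rfl⟩ := Submodule.mem_map.mp hz
      exact hL1stab c w (Submodule.mem_inf.mp hw).1
  have part1b : Disjoint (L₁ ⊓ V₁) ((L₁ ⊓ V₁).map (ρ c)) := by
    rw [Submodule.disjoint_def]
    intro v hv1 hv2
    obtain ⟨w, hw, hwv⟩ := Submodule.mem_map.mp hv2
    have hw2 : w.2 = 0 := (hker _).mp (Submodule.mem_inf.mp hw).2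
    have hv2' : v.2 = 0 := (hker _).mp (Submodule.mem_inf.mp hv1).2
    have hveq : v = (w.2, w.1) := by rw [← hwv, hρc]
    have hv1' : v.1 = 0 := by rw [hveq]; exact hw2
    have hv2'' : v.2 = 0 := hv2'
    calc v = (v.1, v.2) := rfl
    _ = 0 := by rw [hv1', hv2'']; rfl
  -- basis pair for L₂ and a generator of L₂/L₁
  obtain ⟨u₂, w₂, hu₂, hw₂, hspan₂, hind₂⟩ := aux_pair L₂ hL2free hL2rank
  have hcyc : ∀ v v'' : F × F, v ∈ L₂ → v'' ∈ L₂ →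
      (∃ e : PowerSeries ℤ_[p], v - e • v'' ∈ L₁) ∨
      (∃ e : PowerSeries ℤ_[p], v'' - e • v ∈ L₁) := by
    intro v v'' hv hv''
    obtain ⟨a, b, hab, hmem⟩ := hpair v.1 v''.1 (hXB v hv) (hXB v'' hv'')
    have hw2' : (C (R := ℤ_[p]) a) • v - (C (R := ℤ_[p]) b) • v'' ∈ L₂ :=
      L₂.sub_mem (L₂.smul_mem _ hv) (L₂.smul_mem _ hv'')
    have hw1' : (C (R := ℤ_[p]) a) • v - (C (R := ℤ_[p]) b) • v'' ∈ L₁ := by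
      refine (hfirstB _ hw2' ?_).1
      simpa [Prod.smul_fst, Prod.fst_sub] using hmem
    by_cases ha : a = 0
    · have hb : b ≠ 0 := by tauto
      right
      refine ⟨0, ?_⟩
      have hbv : (C (R := ℤ_[p]) b) • v'' ∈ L₁ := by
        have := L₁.neg_mem hw1'
        simpa [ha] using this
      have := hNTF v'' hv'' b hb hbv
      simpa using this
    · by_cases hb : b = 0
      · left
        refine ⟨0, ?_⟩
        have hav : (C (R := ℤ_[p]) a) • v ∈ L₁ := by simpa [hb] using hw1'
        have := hNTF v hv a ha hav
        simpa using this
      · rcases ValuationRing.dvd_total a b with ⟨k, hk⟩ | ⟨k, hk⟩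
        · left
          refine ⟨C (R := ℤ_[p]) k, ?_⟩
          have heq : (C (R := ℤ_[p]) a) • (v - (C (R := ℤ_[p]) k) • v'')
              = (C (R := ℤ_[p]) a) • v - (C (R := ℤ_[p]) b) • v'' := by
            rw [smul_sub, smul_smul, ← map_mul, ← hk]
          have h' : (C (R := ℤ_[p]) a) • (v - (C (R := ℤ_[p]) k) • v'') ∈ L₁ := by rw [heq]; exact hw1'
          exact hNTF _ (L₂.sub_mem hv (L₂.smul_mem _ hv'')) a ha h'
        · right
          refine ⟨C (R := ℤ_[p]) k, ?_⟩
          have heq : (C (R := ℤ_[p]) b) • (v'' - (C (R := ℤ_[p]) k) • v)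
              = -((C (R := ℤ_[p]) a) • v - (C (R := ℤ_[p]) b) • v'') := by
            rw [smul_sub, smul_smul, ← map_mul, ← hk]
            abel
          have h' : (C (R := ℤ_[p]) b) • (v'' - (C (R := ℤ_[p]) k) • v) ∈ L₁ := by
            rw [heq]; exact L₁.neg_mem hw1'
          exact hNTF _ (L₂.sub_mem hv'' (L₂.smul_mem _ hv)) b hb h'
  obtain ⟨v₀, hv₀2, hrep⟩ : ∃ v₀, v₀ ∈ L₂ ∧
      ∀ v ∈ L₂, ∃ r : PowerSeries ℤ_[p], v - r • v₀ ∈ L₁ := by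
    rcases hcyc u₂ w₂ hu₂ hw₂ with ⟨e, he⟩ | ⟨e, he⟩
    · refine ⟨w₂, hw₂, ?_⟩
      intro v hv
      obtain ⟨r, s, hrs⟩ := hspan₂ v hv
      refine ⟨r * e + s, ?_⟩
      have heq : v - (r * e + s) • w₂ = r • (u₂ - e • w₂) := by rw [hrs, add_smul, smul_sub, smul_smul]; abel
      rw [heq]
      exact L₁.smul_mem _ he
    · refine ⟨u₂, hu₂, ?_⟩
      intro v hv
      obtain ⟨r, s, hrs⟩ := hspan₂ v hv
      refine ⟨s * e + r, ?_⟩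
      have heq : v - (s * e + r) • u₂ = s • (w₂ - e • u₂) := by rw [hrs, add_smul, smul_sub, smul_smul]; abel
      rw [heq]
      exact L₁.smul_mem _ he
  set g : (F × F) ⧸ L₁ := L₁.mkQ v₀ with hgdef
  have hv'ne : L₁.mkQ v' ≠ 0 := by
    rw [Submodule.mkQ_apply, Ne, Submodule.Quotient.mk_eq_zero]
    exact hv'1
  have hNspan : L₂.map L₁.mkQ = Submodule.span (PowerSeries ℤ_[p]) {g} := by
    apply le_antisymm
    · intro z hz
      obtain ⟨v, hv, rfl⟩ := Submodule.mem_map.mp hz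
      obtain ⟨r, hr⟩ := hrep v hv
      rw [Submodule.mem_span_singleton]
      refine ⟨r, ?_⟩
      have h0 : L₁.mkQ (v - r • v₀) = 0 := by
        rw [Submodule.mkQ_apply, Submodule.Quotient.mk_eq_zero]
        exact hr
      rw [map_sub, map_smul] at h0
      rw [hgdef]
      exact (sub_eq_zero.mp h0).symm
    · rw [Submodule.span_le, Set.singleton_subset_iff]
      exact Submodule.mem_map.mpr ⟨v₀, hv₀2, rfl⟩
  have hv₀n1 : v₀ ∉ L₁ := by
    intro hmem
    have hg0 : g = 0 := by
      rw [hgdef, Submodule.mkQ_apply, Submodule.Quotient.mk_eq_zero]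
      exact hmem
    have hmem' : L₁.mkQ v' ∈ Submodule.span (PowerSeries ℤ_[p]) ({g} : Set ((F × F) ⧸ L₁)) :=
      hNspan ▸ Submodule.mem_map.mpr ⟨v', hv'2, rfl⟩
    rw [hg0, Submodule.span_zero_singleton] at hmem'
    exact hv'ne ((Submodule.mem_bot _).mp hmem')
  have hXg : (X : PowerSeries ℤ_[p]) • g = 0 := by
    rw [hgdef, ← map_smul, Submodule.mkQ_apply, Submodule.Quotient.mk_eq_zero]
    exact hXL₁ v₀ hv₀2
  have hann : Ideal.torsionOf (PowerSeries ℤ_[p]) ((F × F) ⧸ L₁) g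
      = Ideal.span {(X : PowerSeries ℤ_[p])} := by
    ext f
    rw [Ideal.mem_torsionOf_iff, Ideal.mem_span_singleton]
    constructor
    · intro hf
      have hf' : f • v₀ ∈ L₁ := by
        rw [← Submodule.Quotient.mk_eq_zero L₁, ← Submodule.mkQ_apply, map_smul, ← hgdef]
        exact hf
      rw [X_dvd_iff]
      by_contra h0
      obtain ⟨gg, hgg⟩ : (X : PowerSeries ℤ_[p]) ∣ (f - C (R := ℤ_[p]) (constantCoeff (R := ℤ_[p]) f)) :=
        X_dvd_iff.mpr (by simp)
      have h3 : (f - C (R := ℤ_[p]) (constantCoeff (R := ℤ_[p]) f)) • v₀ ∈ L₁ := by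
        rw [hgg, mul_comm, ← smul_smul]
        exact L₁.smul_mem _ (hXL₁ v₀ hv₀2)
      have h2 : (C (R := ℤ_[p]) (constantCoeff (R := ℤ_[p]) f)) • v₀ ∈ L₁ := by
        have := L₁.sub_mem hf' h3
        simpa [sub_smul, sub_sub_cancel] using this
      exact hv₀n1 (hNTF v₀ hv₀2 _ h0 h2)
    · rintro ⟨h, rfl⟩
      rw [mul_comm, ← smul_smul, hXg, smul_zero]
  refine ⟨⟨part1a, part1b⟩, ⟨?_⟩⟩
  exact (LinearEquiv.ofEq _ _ hNspan).trans
    ((Ideal.quotTorsionOfEquivSpanSingleton (PowerSeries ℤ_[p]) _ g).symm.trans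
      (Submodule.quotEquivOfEq _ _ hann))
end

section
/- Let ℓ be an odd prime and let 𝔞 be a nonzero fractional ideal of a number field K whose class in Cl(K) has order exactly ℓ, and suppose 𝔞^ℓ = (α) for some α ∈ K^×. Then α is not an ℓ-th power in K(μ_ℓ)^×, where K(μ_ℓ) is the field obtained by adjoining a primitive ℓ-th root of unity. -/
open NumberField

theorem aux_frac_ideal_torsionfree {R : Type*} [CommRing R] [IsDedekindDomain R]
    (K : Type*) [Field K] [Algebra R K] [IsFractionRing R K]
    {I : FractionalIdeal (nonZeroDivisors R) K} (hI : I ≠ 0) {n : ℕ} (hn : n ≠ 0)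
    (h : I ^ n = 1) : I = 1 := by
  have hcount : ∀ v : IsDedekindDomain.HeightOneSpectrum R,
      FractionalIdeal.count K v I = 0 := by
    intro v
    have := FractionalIdeal.count_pow K v n I
    rw [h, FractionalIdeal.count_one] at this
    have hn' : (n : ℤ) ≠ 0 := Int.natCast_ne_zero.mpr hn
    exact (mul_eq_zero.mp this.symm).resolve_left hn'
  have := FractionalIdeal.finprod_heightOneSpectrum_factorization' K hI
  rw [← this]
  apply finprod_eq_one_of_forall_eq_one
  intro v
  rw [hcount v, zpow_zero]

/-- Let `ℓ` be an odd prime and `𝔞` a nonzero fractional ideal of a number field `K` whose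
class in `Cl(K)` has order exactly `ℓ` (for `ℓ` prime: `𝔞` is not principal but `𝔞^ℓ = (α)`
for some `α ∈ K^×`).  Then `α` is not an `ℓ`-th power in `K(μ_ℓ)^×`. -/
theorem stmt9 {K : Type*} [Field K] [NumberField K] (ℓ : ℕ) (hℓ : ℓ.Prime) (hodd : Odd ℓ)
    (𝔞 : FractionalIdeal (nonZeroDivisors (𝓞 K)) K) (h𝔞 : 𝔞 ≠ 0)
    (hnp : ¬ ((𝔞 : Submodule (𝓞 K) K).IsPrincipal))
    (α : K) (hα : α ≠ 0)
    (hpow : 𝔞 ^ ℓ = FractionalIdeal.spanSingleton (nonZeroDivisors (𝓞 K)) α)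
    (M : Type*) [Field M] [Algebra K M]
    [IsCyclotomicExtension {ℓ} K M] :
    ¬ ∃ γ : M, γ ^ ℓ = algebraMap K M α := by
  rintro ⟨γ, hγ⟩
  set n : ℕ+ := (⟨ℓ, hℓ.pos⟩ : ℕ+)
  -- finite dimensional
  haveI : FiniteDimensional K M := IsCyclotomicExtension.finiteDimensional {ℓ} K M
  set d : ℕ := Module.finrank K M with hd
  -- d is coprime to ℓ
  obtain ⟨ζ, hζ⟩ := IsCyclotomicExtension.exists_isPrimitiveRoot K M (Set.mem_singleton ℓ) hℓ.ne_zero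
  have hζ' : IsPrimitiveRoot ζ ℓ := hζ
  haveI : NeZero ℓ := ⟨hℓ.ne_zero⟩
  have hdim : d = (minpoly K ζ).natDegree := by
    rw [hd, (hζ.powerBasis K).finrank, ← (hζ.powerBasis K).natDegree_minpoly,
      hζ.powerBasis_gen K]
  have hdvd : minpoly K ζ ∣ Polynomial.cyclotomic ℓ K := by
    apply minpoly.dvd
    rw [Polynomial.aeval_def, Polynomial.eval₂_eq_eval_map, Polynomial.map_cyclotomic]
    exact hζ'.isRoot_cyclotomic hℓ.pos
  have hle : d ≤ Nat.totient ℓ := by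
    rw [hdim, ← Polynomial.natDegree_cyclotomic ℓ K]
    exact Polynomial.natDegree_le_of_dvd hdvd (Polynomial.cyclotomic_ne_zero ℓ K)
  have hdpos : 0 < d := Module.finrank_pos
  have hcop : Nat.Coprime ℓ d := by
    rw [hℓ.coprime_iff_not_dvd]
    intro hdvd'
    have := Nat.le_of_dvd hdpos hdvd'
    have h2 : Nat.totient ℓ < ℓ := Nat.totient_lt ℓ hℓ.one_lt
    omega
  -- norm argument: α is an ℓ-th power in K
  have hγ0 : γ ≠ 0 := by
    intro h0
    rw [h0, zero_pow hℓ.ne_zero] at hγ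
    exact hα ((map_eq_zero _).mp hγ.symm)
  have hnorm : (Algebra.norm K γ) ^ ℓ = α ^ d := by
    rw [← map_pow, hγ, Algebra.norm_algebraMap]
  -- pass to units
  set u : Kˣ := Units.mk0 α hα
  set N : Kˣ := Units.mk0 (Algebra.norm K γ) (Algebra.norm_ne_zero_iff.mpr hγ0)
  have hNu : N ^ ℓ = u ^ d := by
    ext
    push_cast [N, u]
    exact hnorm
  obtain ⟨a, b, hab⟩ : ∃ a b : ℤ, a * ℓ + b * d = 1 := by
    refine ⟨Nat.gcdA ℓ d, Nat.gcdB ℓ d, ?_⟩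
    have h1 := Nat.gcd_eq_gcd_ab ℓ d
    rw [Nat.Coprime] at hcop
    rw [hcop] at h1
    push_cast at h1
    linear_combination -h1
  set w : Kˣ := u ^ a * N ^ b with hwdef
  have hw : w ^ ℓ = u := by
    have h1 : (N : Kˣ) ^ (ℓ : ℤ) = u ^ (d : ℤ) := by
      rw [zpow_natCast, zpow_natCast, hNu]
    calc w ^ ℓ = w ^ (ℓ : ℤ) := (zpow_natCast w ℓ).symm
      _ = u ^ (a * ℓ) * N ^ (b * ℓ) := by
          rw [hwdef, mul_zpow, ← zpow_mul, ← zpow_mul]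
      _ = u ^ (a * ℓ) * u ^ (d * b) := by
          rw [show (N : Kˣ) ^ (b * (ℓ:ℤ)) = u ^ ((d:ℤ) * b) from by
            rw [mul_comm b (ℓ:ℤ), zpow_mul, h1, ← zpow_mul]]
      _ = u ^ (a * ℓ + d * b) := (zpow_add u _ _).symm
      _ = u ^ (1 : ℤ) := by rw [show a * (ℓ:ℤ) + (d:ℤ) * b = 1 from by linear_combination hab]
      _ = u := zpow_one u
  -- so α = (w : K) ^ ℓ, hence 𝔞 ^ ℓ = (spanSingleton w) ^ ℓ
  have hαw : α = (w : K) ^ ℓ := by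
    have := congrArg Units.val hw
    simpa [u] using this.symm
  have hspan : 𝔞 ^ ℓ = (FractionalIdeal.spanSingleton (nonZeroDivisors (𝓞 K)) (w : K)) ^ ℓ := by
    rw [hpow, hαw, ← FractionalIdeal.spanSingleton_pow]
  -- cancel the ℓ-th power
  have hw0 : FractionalIdeal.spanSingleton (nonZeroDivisors (𝓞 K)) (w : K) ≠ 0 := by
    rw [FractionalIdeal.spanSingleton_ne_zero_iff]
    exact Units.ne_zero w
  have hI : 𝔞 * (FractionalIdeal.spanSingleton (nonZeroDivisors (𝓞 K)) (w : K))⁻¹ = 1 := by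
    apply aux_frac_ideal_torsionfree K (mul_ne_zero h𝔞 (inv_ne_zero hw0)) hℓ.ne_zero
    rw [mul_pow, hspan, inv_pow, mul_inv_cancel₀ (pow_ne_zero _ hw0)]
  have h𝔞w : 𝔞 = FractionalIdeal.spanSingleton (nonZeroDivisors (𝓞 K)) (w : K) := by
    have := congrArg (· * FractionalIdeal.spanSingleton (nonZeroDivisors (𝓞 K)) (w : K)) hI
    simpa [mul_assoc, inv_mul_cancel₀ hw0] using this
  apply hnp
  rw [h𝔞w]
  exact ⟨⟨(w : K), by rw [FractionalIdeal.coe_spanSingleton]⟩⟩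
end
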